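/- Let n ≥ 1, k ≥ 1, q = 2^k, and let f : 𝔽₂ⁿ → ℤ_q be a generalized Boolean function. Then for every x ∈ 𝔽₂ⁿ, Σ_{a,b ∈ 𝔽₂ⁿ} ζ^{D_b D_a f(x)} = 2^{−n} · ζ^{f(x)} · Σ_{d ∈ 𝔽₂ⁿ} |H_f(d)|² · conj(H_f(d)) · (−1)^{x·d}, where conj denotes complex conjugation. -/

import Mathlib

open scoped BigOperators

/-- The primitive `q`-th complex root of unity `ζ_q = e^{2πi/q}`. -/
noncomputable def zetaQ (q : ℕ) : ℂ := Complex.exp (2 * Real.pi * Complex.I / q)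

/-- The generalized Walsh–Hadamard transform of `f : 𝔽₂ⁿ → ℤ_q`. -/
noncomputable def gWHT {n : ℕ} (q : ℕ) (f : (Fin n → ZMod 2) → ZMod q)
    (u : Fin n → ZMod 2) : ℂ :=
  ∑ x : Fin n → ZMod 2, zetaQ q ^ (f x).val * (-1 : ℂ) ^ (∑ i, (u i * x i).val)

/-- The Walsh–Hadamard transform of a Boolean function `g : 𝔽₂ⁿ → 𝔽₂`. -/
noncomputable def bWHT {n : ℕ} (g : (Fin n → ZMod 2) → ZMod 2)
    (u : Fin n → ZMod 2) : ℂ :=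
  ∑ x : Fin n → ZMod 2, (-1 : ℂ) ^ (g x + ∑ i, u i * x i).val

/-- The `i`-th binary digit `a_i` of a function `f : 𝔽₂ⁿ → ℤ_{2^k}`. -/
def digit {n q : ℕ} (f : (Fin n → ZMod 2) → ZMod q) (i : ℕ)
    (x : Fin n → ZMod 2) : ZMod 2 :=
  (((f x).val / 2 ^ i : ℕ) : ZMod 2)

/-- The component function `f_c = c_0 a_0 ⊕ ⋯ ⊕ c_{k-2} a_{k-2} ⊕ a_{k-1}`. -/
def comp {n k : ℕ} (f : (Fin n → ZMod 2) → ZMod (2 ^ k)) (c : Fin (k - 1) → ZMod 2)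
    (x : Fin n → ZMod 2) : ZMod 2 :=
  (∑ j : Fin (k - 1), c j * digit f (j : ℕ) x) + digit f (k - 1) x

/-- The canonical bijection `ι : 𝔽₂^m → ℤ_{2^m}`. -/
def iotaF {m : ℕ} (d : Fin m → ZMod 2) : ZMod (2 ^ m) :=
  ∑ j : Fin m, ((d j).val : ZMod (2 ^ m)) * 2 ^ (j : ℕ)

/-- The inverse `ι⁻¹ : ℤ_{2^m} → 𝔽₂^m` of the canonical bijection. -/
def invIota {m : ℕ} (g : ZMod (2 ^ m)) : Fin m → ZMod 2 :=
  fun j => ((g.val / 2 ^ (j : ℕ) : ℕ) : ZMod 2)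

lemma zetaQ_pow (q : ℕ) (hq : q ≠ 0) : zetaQ q ^ q = 1 := by
  rw [zetaQ, ← Complex.exp_nat_mul, mul_comm, div_mul_cancel₀]
  · exact Complex.exp_two_pi_mul_I
  · exact_mod_cast hq

noncomputable def zE (q : ℕ) (u : ZMod q) : ℂ := zetaQ q ^ u.val

lemma zE_add (q : ℕ) (hq : q ≠ 0) (u v : ZMod q) : zE q (u + v) = zE q u * zE q v := by
  haveI : NeZero q := ⟨hq⟩
  rw [zE, zE, zE, ← pow_add, ZMod.val_add, ← pow_eq_pow_mod _ (zetaQ_pow q hq)]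

lemma zE_zero (q : ℕ) (hq : q ≠ 0) : zE q 0 = 1 := by
  haveI : NeZero q := ⟨hq⟩
  rw [zE, ZMod.val_zero, pow_zero]

lemma conj_zE (q : ℕ) (hq : q ≠ 0) (u : ZMod q) :
    (starRingEnd ℂ) (zE q u) = zE q (-u) := by
  have h1 : zE q (-u) * zE q u = 1 := by
    rw [← zE_add q hq, neg_add_cancel, zE_zero q hq]
  have hconj : (starRingEnd ℂ) (zetaQ q) = (zetaQ q)⁻¹ := by
    rw [zetaQ, ← Complex.exp_conj, ← Complex.exp_neg]
    congr 1
    simp [map_div₀, Complex.conj_I, map_ofNat]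
    ring
  have h2 : (starRingEnd ℂ) (zE q u) * zE q u = 1 := by
    rw [zE, map_pow, hconj, inv_pow, inv_mul_cancel₀]
    exact pow_ne_zero _ (Complex.exp_ne_zero _)
  calc (starRingEnd ℂ) (zE q u) = (zE q u)⁻¹ := eq_inv_of_mul_eq_one_left h2
    _ = zE q (-u) := (eq_inv_of_mul_eq_one_left h1).symm

lemma neg_one_pow_congr_mod (a b : ℕ) (h : a % 2 = b % 2) : (-1 : ℂ) ^ a = (-1 : ℂ) ^ b := by
  rw [pow_eq_pow_mod a (by norm_num : (-1:ℂ) ^ 2 = 1),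
      pow_eq_pow_mod b (by norm_num : (-1:ℂ) ^ 2 = 1), h]

lemma chi_mul {n : ℕ} (d u v : Fin n → ZMod 2) :
    (-1:ℂ) ^ (∑ i, (d i * u i).val) * (-1:ℂ) ^ (∑ i, (d i * v i).val)
      = (-1:ℂ) ^ (∑ i, (d i * (u + v) i).val) := by
  rw [← pow_add]
  apply neg_one_pow_congr_mod
  rw [← Finset.sum_add_distrib]
  rw [Finset.sum_nat_mod, Finset.sum_nat_mod (f := fun i => (d i * (u + v) i).val)]
  congr 1
  apply Finset.sum_congr rfl
  intro i _
  show ((d i * u i).val + (d i * v i).val) % 2 = (d i * (u i + v i)).val % 2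
  rw [mul_add, ZMod.val_add]; omega

lemma chi_sum (n : ℕ) (v : Fin n → ZMod 2) :
    ∑ d : Fin n → ZMod 2, (-1:ℂ) ^ (∑ i, (d i * v i).val)
      = if v = 0 then (2:ℂ) ^ n else 0 := by
  have h1 : ∀ d : Fin n → ZMod 2, (-1:ℂ) ^ (∑ i, (d i * v i).val)
      = ∏ i, (-1:ℂ) ^ ((d i * v i).val) := by
    intro d; rw [Finset.prod_pow_eq_pow_sum]
  simp only [h1]
  rw [← Fintype.prod_sum (fun (i : Fin n) (t : ZMod 2) => (-1:ℂ) ^ ((t * v i).val))]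
  have h2 : ∀ i, (∑ t : ZMod 2, (-1:ℂ) ^ ((t * v i).val)) = if v i = 0 then 2 else 0 := by
    intro i
    have hall : ∀ t : ZMod 2, t = 0 ∨ t = 1 := by decide
    have hcases := hall (v i)
    have hsum : (∑ t : ZMod 2, (-1:ℂ) ^ ((t * v i).val))
        = (-1:ℂ) ^ (((0 : ZMod 2) * v i).val) + (-1:ℂ) ^ (((1 : ZMod 2) * v i).val) :=
      Fin.sum_univ_two _
    rcases hcases with h | h <;> rw [hsum, h] <;> simp [ZMod.val_one] <;> norm_num
  rw [Finset.prod_congr rfl (fun i _ => h2 i)]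
  by_cases hv : v = 0
  · simp [hv]
  · obtain ⟨i, hi⟩ : ∃ i, v i ≠ 0 := by
      by_contra h; push_neg at h; exact hv (funext h)
    rw [if_neg hv]
    apply Finset.prod_eq_zero (Finset.mem_univ i)
    simp [hi]

lemma key (n q : ℕ) (hq : q ≠ 0) (f : (Fin n → ZMod 2) → ZMod q)
    (x : Fin n → ZMod 2) :
    ∑ a : Fin n → ZMod 2, ∑ b : Fin n → ZMod 2,
      zE q (f x - f (x + a) - f (x + b) + f (x + a + b))
    = ((2:ℂ) ^ n)⁻¹ * zE q (f x) *
        ∑ d : Fin n → ZMod 2,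
          gWHT q f d * (starRingEnd ℂ) (gWHT q f d) * (starRingEnd ℂ) (gWHT q f d) *
            (-1:ℂ) ^ (∑ i, (d i * x i).val) := by
  have h2v : ∀ g : Fin n → ZMod 2, g + g = 0 := by
    intro g; funext i
    have : ∀ t : ZMod 2, t + t = 0 := by decide
    exact this _
  have hiff : ∀ u v : Fin n → ZMod 2, u + v = 0 ↔ u = v := by
    intro u v
    constructor
    · intro h
      have h' := congrArg (· + v) h
      simpa [add_assoc, h2v v] using h'
    · rintro rfl; exact h2v _
  have hconjH : ∀ d, (starRingEnd ℂ) (gWHT q f d)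
      = ∑ z : Fin n → ZMod 2, zE q (-(f z)) * (-1:ℂ) ^ (∑ i, (d i * z i).val) := by
    intro d
    rw [gWHT, map_sum]
    refine Finset.sum_congr rfl fun z _ => ?_
    rw [map_mul]
    congr 1
    · exact conj_zE q hq (f z)
    · rw [map_pow, map_neg, map_one]
  -- expand the summand over d into a triple sum
  have expand : ∀ d, gWHT q f d * (starRingEnd ℂ) (gWHT q f d) * (starRingEnd ℂ) (gWHT q f d) *
        (-1:ℂ) ^ (∑ i, (d i * x i).val)
      = ∑ y : Fin n → ZMod 2, ∑ z : Fin n → ZMod 2, ∑ w : Fin n → ZMod 2,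
          (zE q (f w) * zE q (-(f z)) * zE q (-(f y))) *
            (-1:ℂ) ^ (∑ i, (d i * (w + z + y + x) i).val) := by
    intro d
    rw [hconjH d, show gWHT q f d = ∑ y : Fin n → ZMod 2,
          zE q (f y) * (-1:ℂ) ^ (∑ i, (d i * y i).val) from rfl]
    simp only [Finset.sum_mul, Finset.mul_sum]
    refine Finset.sum_congr rfl fun y _ => ?_
    refine Finset.sum_congr rfl fun z _ => ?_
    refine Finset.sum_congr rfl fun w _ => ?_
    rw [← chi_mul d (w + z + y) x, ← chi_mul d (w + z) y, ← chi_mul d w z]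
    ring
  have swap4 : ∀ (F : (Fin n → ZMod 2) → (Fin n → ZMod 2) → (Fin n → ZMod 2) →
        (Fin n → ZMod 2) → ℂ),
      ∑ d : Fin n → ZMod 2, ∑ y : Fin n → ZMod 2, ∑ z : Fin n → ZMod 2,
        ∑ w : Fin n → ZMod 2, F d y z w
      = ∑ y : Fin n → ZMod 2, ∑ z : Fin n → ZMod 2, ∑ w : Fin n → ZMod 2,
        ∑ d : Fin n → ZMod 2, F d y z w := by
    intro F
    rw [Finset.sum_comm]
    refine Finset.sum_congr rfl fun y _ => ?_
    rw [Finset.sum_comm]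
    refine Finset.sum_congr rfl fun z _ => ?_
    rw [Finset.sum_comm]
  have hcond : ∀ y z w : Fin n → ZMod 2, (w + z + y + x = 0) ↔ (w = x + (z + y)) := by
    intro y z w
    rw [add_assoc w z y, add_assoc, hiff, add_comm x (z + y)]
  have hcancel : ((2:ℂ) ^ n)⁻¹ * (2:ℂ) ^ n = 1 := inv_mul_cancel₀ (pow_ne_zero _ two_ne_zero)
  calc
    ∑ a : Fin n → ZMod 2, ∑ b : Fin n → ZMod 2,
        zE q (f x - f (x + a) - f (x + b) + f (x + a + b))
      = ∑ a : Fin n → ZMod 2, ∑ b : Fin n → ZMod 2,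
          zE q (f x) * (zE q (f (x + a + b)) * zE q (-(f (x + a))) * zE q (-(f (x + b)))) := by
        refine Finset.sum_congr rfl fun a _ => Finset.sum_congr rfl fun b _ => ?_
        rw [sub_eq_add_neg, sub_eq_add_neg, zE_add q hq, zE_add q hq, zE_add q hq]
        ring
    _ = ∑ z : Fin n → ZMod 2, ∑ w : Fin n → ZMod 2,
          zE q (f x) * (zE q (f (x + (z + w))) * zE q (-(f z)) * zE q (-(f w))) := by
        refine (Fintype.sum_equiv (Equiv.addLeft x) _ _ fun a => ?_)
        refine (Fintype.sum_equiv (Equiv.addLeft x) _ _ fun b => ?_)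
        have harg : x + (x + a + (x + b)) = x + a + b := by
          funext i
          show x i + (x i + a i + (x i + b i)) = x i + a i + b i
          have : ∀ s t u : ZMod 2, s + (s + t + (s + u)) = s + t + u := by decide
          exact this _ _ _
        simp only [Equiv.coe_addLeft]
        rw [harg]
    _ = ((2:ℂ) ^ n)⁻¹ * zE q (f x) *
        ∑ d : Fin n → ZMod 2,
          gWHT q f d * (starRingEnd ℂ) (gWHT q f d) * (starRingEnd ℂ) (gWHT q f d) *
            (-1:ℂ) ^ (∑ i, (d i * x i).val) := by
        rw [Finset.sum_congr rfl (fun d _ => expand d), swap4]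
        have step1 : ∀ y z w : Fin n → ZMod 2,
            (∑ d : Fin n → ZMod 2, (zE q (f w) * zE q (-(f z)) * zE q (-(f y))) *
              (-1:ℂ) ^ (∑ i, (d i * (w + z + y + x) i).val))
            = (zE q (f w) * zE q (-(f z)) * zE q (-(f y))) *
                (if w + z + y + x = 0 then (2:ℂ)^n else 0) := by
          intro y z w
          rw [← Finset.mul_sum, chi_sum]
        simp only [step1, hcond, mul_ite, mul_zero]
        simp only [Finset.sum_ite_eq', Finset.mem_univ, if_true]
        simp only [← Finset.sum_mul]
        have hpull : ∀ S : ℂ, ((2:ℂ)^n)⁻¹ * zE q (f x) * (S * (2:ℂ)^n)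
            = zE q (f x) * S := by
          intro S
          rw [show ((2:ℂ)^n)⁻¹ * zE q (f x) * (S * (2:ℂ)^n)
              = (((2:ℂ)^n)⁻¹ * (2:ℂ)^n) * (zE q (f x) * S) from by ring, hcancel, one_mul]
        rw [hpull, Finset.mul_sum]
        refine Finset.sum_congr rfl fun z _ => ?_
        rw [Finset.sum_mul, Finset.mul_sum]
        refine Finset.sum_congr rfl fun w _ => ?_
        rw [show x + (w + z) = x + (z + w) from by rw [add_comm w z]]
        ring

/-- computation inside the proof of Theorem 11:
`Σ_{a,b} ζ^{D_b D_a f(x)} = 2^{−n}·ζ^{f(x)}·Σ_d |H_f(d)|²·conj(H_f(d))·(−1)^{x·d}`. -/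
theorem stmt18 (n k : ℕ) (hn : 1 ≤ n) (hk : 1 ≤ k)
    (f : (Fin n → ZMod 2) → ZMod (2 ^ k)) :
    ∀ x : Fin n → ZMod 2,
      ∑ a : Fin n → ZMod 2, ∑ b : Fin n → ZMod 2,
        zetaQ (2 ^ k) ^ (f x - f (fun i => x i + a i) - f (fun i => x i + b i) +
          f (fun i => x i + a i + b i)).val
      = ((2 : ℂ) ^ n)⁻¹ * zetaQ (2 ^ k) ^ (f x).val *
          ∑ d : Fin n → ZMod 2,
            ((‖gWHT (2 ^ k) f d‖ ^ 2 : ℝ) : ℂ) *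
              (starRingEnd ℂ) (gWHT (2 ^ k) f d) *
              (-1 : ℂ) ^ (∑ i, (x i * d i).val) := by
  intro x
  have hq : (2:ℕ) ^ k ≠ 0 := pow_ne_zero _ two_ne_zero
  have h := key n (2 ^ k) hq f x
  refine h.trans ?_
  congr 1
  refine Finset.sum_congr rfl fun d _ => ?_
  have habs : ((‖gWHT (2 ^ k) f d‖ ^ 2 : ℝ) : ℂ)
      = gWHT (2 ^ k) f d * (starRingEnd ℂ) (gWHT (2 ^ k) f d) := by
    rw [Complex.sq_norm]
    exact (Complex.mul_conj _).symm
  rw [habs]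
  have hs : (∑ i, (d i * x i).val) = ∑ i, (x i * d i).val :=
    Finset.sum_congr rfl fun i _ => by rw [mul_comm]
  rw [hs]
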